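/- Suppose v₁,...,v_k ∈ ℕ^k are integer vectors with all coordinates positive that are linearly independent over ℝ, and none of the v_i is parallel to a coordinate axis. Let U = {a₁v₁+⋯+a_kv_k ∈ ℝ^k : a_i ∈ ℝ, a_i ≥ 0} be the cone they generate and V = U ∩ ℕ^k the set of lattice points in U. Let S be the set of all lattice points of ℕ^k lying in the simplex generated by kv₁,...,kv_k (i.e. in {a₁(kv₁)+⋯+a_k(kv_k) : a₁+⋯+a_k ≤ 1, all a_i ≥ 0}), let X_i = {2^j v_i : j = 0,1,2,...}, and let X = S ∪ X₁ ∪ ⋯ ∪ X_k. Then FS(X) = V. -/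

import Mathlib

open scoped BigOperators

/-- `FS X` is the set of all sums of finitely many distinct elements of `X`
(sums over finite nonempty subsets of `X`). -/
def FS {α : Type*} [AddCommMonoid α] (X : Set α) : Set α :=
  {s | ∃ F : Finset α, F.Nonempty ∧ ↑F ⊆ X ∧ s = ∑ x ∈ F, x}

lemma exists_binary (n : ℕ) : ∃ B : Finset ℕ, (∑ j ∈ B, 2^j = n) ∧ ∀ j ∈ B, 2^j ≤ n := by
  induction n using Nat.strong_induction_on with
  | _ n ih =>
    rcases Nat.eq_zero_or_pos n with h0 | h0
    · exact ⟨∅, by simp [h0], by simp⟩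
    · set t := Nat.log 2 n with ht
      have h1 : 2 ^ t ≤ n := Nat.pow_log_le_self 2 h0.ne'
      have h2 : n < 2 ^ (t+1) := Nat.lt_pow_succ_log_self (by norm_num) n
      obtain ⟨B', hsum, hle⟩ := ih (n - 2^t) (by omega)
      have htn : t ∉ B' := fun h => by
        have := hle t h
        have : 2^(t+1) = 2 * 2^t := by ring
        omega
      refine ⟨insert t B', ?_, ?_⟩
      · rw [Finset.sum_insert htn, hsum]; omega
      · intro j hj
        rcases Finset.mem_insert.mp hj with rfl | hj
        · exact h1
        · have := hle j hj; omega

/-- For linearly independent positive integer vectors `v₁,…,v_k`, none parallel to a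
coordinate axis, the set `X = S ∪ X₁ ∪ ⋯ ∪ X_k` (where `S` is the set of lattice points of
the simplex generated by `kv₁,…,kv_k` and `Xᵢ = {2^j vᵢ}`) satisfies `FS(X) = V`, the set of
lattice points of the cone generated by `v₁,…,v_k`. -/
theorem stmt_3 (k : ℕ) (v : Fin k → (Fin k → ℕ))
    (hpos : ∀ i j, 1 ≤ v i j)
    (hli : LinearIndependent ℝ (fun i => (fun j => (v i j : ℝ))))
    (hax : ∀ i, ¬ ∃ j : Fin k, ∀ j' : Fin k, j' ≠ j → v i j' = 0)
    (V : Set (Fin k → ℕ))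
    (hV : V = {p | (∀ j, 1 ≤ p j) ∧ ∃ a : Fin k → ℝ, (∀ i, 0 ≤ a i) ∧
      (fun j => (p j : ℝ)) = ∑ i, a i • (fun j => (v i j : ℝ))})
    (S : Set (Fin k → ℕ))
    (hS : S = {p | (∀ j, 1 ≤ p j) ∧ ∃ a : Fin k → ℝ, (∀ i, 0 ≤ a i) ∧ (∑ i, a i) ≤ 1 ∧
      (fun j => (p j : ℝ)) = ∑ i, a i • (fun j => ((k * v i j : ℕ) : ℝ))})
    (X : Set (Fin k → ℕ))
    (hX : X = S ∪ ⋃ i : Fin k, {p | ∃ j : ℕ, p = (2 ^ j) • v i}) :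
    FS X = V := by
  classical
  -- trivial case k = 0
  rcases Nat.eq_zero_or_pos k with hk0 | hk
  · subst hk0
    have hVuniv : V = Set.univ := by
      rw [hV]; ext p
      simp only [Set.mem_setOf_eq, Set.mem_univ, iff_true]
      exact ⟨fun j => j.elim0, fun i => i.elim0, fun i => i.elim0, funext fun j => j.elim0⟩
    have hpX : ∀ p : Fin 0 → ℕ, p ∈ X := by
      intro p
      rw [hX]; left; rw [hS]
      exact ⟨fun j => j.elim0, fun i => i.elim0, fun i => i.elim0,
        by simp, funext fun j => j.elim0⟩
    rw [hVuniv]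
    apply Set.eq_of_subset_of_subset (Set.subset_univ _)
    intro p _
    refine ⟨{p}, Finset.singleton_nonempty p, ?_, (Finset.sum_singleton (fun x => x) p).symm⟩
    intro x hx
    simp only [Finset.coe_singleton, Set.mem_singleton_iff] at hx
    exact hpX x
  -- main case: k ≥ 1
  set vR : Fin k → (Fin k → ℝ) := fun i => fun j => (v i j : ℝ) with hvR
  -- uniqueness of coefficients
  have huniq : ∀ a b : Fin k → ℝ, ∑ i, a i • vR i = ∑ i, b i • vR i → a = b := by
    intro a b hab
    have h := Fintype.linearIndependent_iff.mp hli (a - b) ?_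
    · funext i; have := h i; simp [Pi.sub_apply] at this; linarith [this]
    · have : ∑ i, (a - b) i • vR i = ∑ i, a i • vR i - ∑ i, b i • vR i := by
        rw [← Finset.sum_sub_distrib]
        exact Finset.sum_congr rfl fun i _ => by rw [Pi.sub_apply, sub_smul]
      rw [this, hab, sub_self]
  have hsingle : ∀ (i : Fin k) (c : ℝ), ∑ i', (Pi.single i c : Fin k → ℝ) i' • vR i' = c • vR i := by
    intro i c
    rw [Finset.sum_eq_single i]
    · rw [Pi.single_eq_same]
    · intro i' _ hne; rw [Pi.single_eq_of_ne hne, zero_smul]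
    · intro h; exact absurd (Finset.mem_univ i) h
  -- powers of two elements, coefficients
  have hpow_coeff : ∀ (i : Fin k) (j : ℕ),
      (fun j' => (((2^j) • v i) j' : ℝ)) = ∑ i', (Pi.single i ((2:ℝ)^j) : Fin k → ℝ) i' • vR i' := by
    intro i j
    rw [hsingle]
    funext j'
    simp [Pi.smul_apply, smul_eq_mul, hvR]
  -- X ⊆ V
  have hXV : X ⊆ V := by
    rw [hX, hV]
    rintro p (hp | hp)
    · rw [hS] at hp
      obtain ⟨h1, a, ha0, _, heq⟩ := hp
      refine ⟨h1, fun i => (k : ℝ) * a i, fun i => mul_nonneg (by positivity) (ha0 i), ?_⟩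
      rw [heq]
      refine Finset.sum_congr rfl fun i _ => ?_
      funext j
      simp only [Pi.smul_apply, smul_eq_mul]
      push_cast; ring
    · simp only [Set.mem_iUnion, Set.mem_setOf_eq] at hp
      obtain ⟨i, j, rfl⟩ := hp
      refine ⟨fun j' => ?_, (Pi.single i ((2:ℝ)^j) : Fin k → ℝ), fun i' => ?_, ?_⟩
      · have h1 := hpos i j'
        have h2 : 1 ≤ 2^j * v i j' := le_trans h1 (Nat.le_mul_of_pos_left _ (by positivity))
        simpa [Pi.smul_apply, smul_eq_mul] using h2
      · rcases eq_or_ne i' i with rfl | hne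
        · rw [Pi.single_eq_same]; positivity
        · rw [Pi.single_eq_of_ne hne]
      · rw [hpow_coeff i j]
  -- V is closed under addition
  have hVadd : ∀ x ∈ V, ∀ y ∈ V, x + y ∈ V := by
    rw [hV]
    rintro x ⟨hx1, a, ha0, hae⟩ y ⟨hy1, b, hb0, hbe⟩
    refine ⟨fun j => le_trans (hx1 j) (Nat.le_add_right _ _), a + b,
      fun i => add_nonneg (ha0 i) (hb0 i), ?_⟩
    have : (fun j => (((x + y) j : ℕ) : ℝ)) = (fun j => (x j : ℝ)) + (fun j => (y j : ℝ)) := by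
      funext j; simp [Pi.add_apply]
    rw [this, hae, hbe, ← Finset.sum_add_distrib]
    exact Finset.sum_congr rfl fun i _ => by rw [Pi.add_apply, add_smul]
  -- forward inclusion
  apply Set.eq_of_subset_of_subset
  · rintro s ⟨F, hFne, hFX, rfl⟩
    exact Finset.sum_induction_nonempty _ (· ∈ V) (fun x y hx hy => hVadd x hx y hy) hFne
      (fun x hx => hXV (hFX hx))
  -- backward inclusion: V ⊆ FS X
  intro p hp
  rw [hV] at hp
  obtain ⟨hp1, a, ha0, heq⟩ := hp
  set n : Fin k → ℕ := fun i => ⌊a i⌋₊ with hn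
  set r : Fin k → ℝ := fun i => a i - n i with hrdef
  have hr0 : ∀ i, 0 ≤ r i := fun i => sub_nonneg.mpr (Nat.floor_le (ha0 i))
  have hr1 : ∀ i, r i < 1 := by
    intro i
    have := Nat.lt_floor_add_one (a i)
    simp only [hrdef, hn]
    linarith
  have hpj : ∀ j, (p j : ℝ) = ∑ i, a i * v i j := by
    intro j
    have h := congrFun heq j
    simpa [Finset.sum_apply, Pi.smul_apply, smul_eq_mul, hvR] using h
  set m : Fin k → ℕ := fun j => ∑ i, n i * v i j with hm
  have hmp : ∀ j, m j ≤ p j := by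
    intro j
    have h1 : (m j : ℝ) ≤ (p j : ℝ) := by
      rw [hpj j]
      simp only [hm]
      push_cast
      apply Finset.sum_le_sum
      intro i _
      exact mul_le_mul_of_nonneg_right (Nat.floor_le (ha0 i)) (by positivity)
    exact_mod_cast h1
  set sN : Fin k → ℕ := fun j => p j - m j with hsNdef
  have hsN : ∀ j, (sN j : ℝ) = ∑ i, r i * v i j := by
    intro j
    have h2 : (sN j : ℝ) = (p j : ℝ) - (m j : ℝ) := by
      simp only [hsNdef]
      push_cast [Nat.cast_sub (hmp j)]
      ring
    rw [h2, hpj j]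
    simp only [hm]
    push_cast
    rw [← Finset.sum_sub_distrib]
    apply Finset.sum_congr rfl
    intro i _
    simp only [hrdef]
    ring
  have hsNcoeff : (fun j => (sN j : ℝ)) = ∑ i, r i • vR i := by
    funext j
    rw [hsN j]
    simp [Finset.sum_apply, Pi.smul_apply, smul_eq_mul, hvR]
  choose B hBsum hBle using fun i => exists_binary (n i)
  have ginj : Function.Injective (fun x : Σ _ : Fin k, ℕ => (2^x.2) • v x.1) := by
    rintro ⟨i, j⟩ ⟨i', j'⟩ hgg
    simp only at hgg
    have hc : (Pi.single i ((2:ℝ)^j) : Fin k → ℝ) = Pi.single i' ((2:ℝ)^j') := by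
      apply huniq
      rw [← hpow_coeff i j, ← hpow_coeff i' j', hgg]
    rcases eq_or_ne i i' with rfl | hne
    · have h1 : (2:ℝ)^j = (2:ℝ)^j' := by
        have := congrFun hc i
        simpa [Pi.single_eq_same] using this
      have h2 : (2:ℕ)^j = 2^j' := by exact_mod_cast h1
      have := Nat.pow_right_injective (le_refl 2) h2
      subst this; rfl
    · exfalso
      have h1 := congrFun hc i
      rw [Pi.single_eq_same, Pi.single_eq_of_ne hne] at h1
      have : (0:ℝ) < 2^j := by positivity
      linarith
  have hPsum : ∑ x ∈ (Finset.univ.sigma B).image (fun x => (2^x.2) • v x.1), x = m := by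
    rw [Finset.sum_image (fun x _ y _ h => ginj h), Finset.sum_sigma]
    funext jc
    simp only [Finset.sum_apply, Pi.smul_apply, smul_eq_mul, hm]
    apply Finset.sum_congr rfl
    intro i _
    rw [← hBsum i, Finset.sum_mul]
  have hmemX : ∀ x ∈ ((Finset.univ.sigma B).image (fun x => (2^x.2) • v x.1) : Finset (Fin k → ℕ)),
      x ∈ X := by
    intro x hx
    obtain ⟨⟨i, j⟩, -, rfl⟩ := Finset.mem_image.mp hx
    rw [hX]; right
    exact Set.mem_iUnion.mpr ⟨i, ⟨j, rfl⟩⟩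
  by_cases hz : ∀ i, r i = 0
  · -- no fractional part: p = m
    have hpm : p = m := by
      funext j
      have h1 : (p j : ℝ) = (m j : ℝ) := by
        rw [hpj j]
        simp only [hm]
        push_cast
        apply Finset.sum_congr rfl
        intro i _
        have h2 := hz i
        simp only [hrdef] at h2
        have : a i = (n i : ℝ) := by linarith
        rw [this]
      exact_mod_cast h1
    have hex : ∃ i, 1 ≤ n i := by
      by_contra hcon
      push_neg at hcon
      have hall : ∀ i, n i = 0 := fun i => by have := hcon i; omega
      have hj0 := hp1 ⟨0, hk⟩
      have hpm0 := congrFun hpm ⟨0, hk⟩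
      simp only [hm] at hpm0
      rw [Finset.sum_eq_zero (fun i _ => by rw [hall i, Nat.zero_mul])] at hpm0
      omega
    obtain ⟨i0, hi0⟩ := hex
    have hB0 : (B i0).Nonempty := by
      rw [Finset.nonempty_iff_ne_empty]
      intro hemp
      have h5 := hBsum i0
      rw [hemp] at h5
      simp at h5
      omega
    obtain ⟨j0, hj0⟩ := hB0
    have hmem0 : (⟨i0, j0⟩ : Σ _ : Fin k, ℕ) ∈ Finset.univ.sigma B :=
      Finset.mem_sigma.mpr ⟨Finset.mem_univ i0, hj0⟩
    refine ⟨(Finset.univ.sigma B).image (fun x => (2^x.2) • v x.1),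
      ⟨_, Finset.mem_image_of_mem _ hmem0⟩,
      (by intro x hx; exact hmemX x hx), ?_⟩
    rw [hPsum, hpm]
  · -- nonzero fractional part
    push_neg at hz
    obtain ⟨i0, hi00⟩ := hz
    have hi0 : 0 < r i0 := lt_of_le_of_ne (hr0 i0) (Ne.symm hi00)
    have hsN1 : ∀ j, 1 ≤ sN j := by
      intro j
      have hpos' : (0:ℝ) < ∑ i, r i * v i j := by
        apply Finset.sum_pos' (fun i _ => mul_nonneg (hr0 i) (by positivity))
        refine ⟨i0, Finset.mem_univ _, mul_pos hi0 ?_⟩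
        have := hpos i0 j
        have : (1:ℝ) ≤ (v i0 j : ℝ) := by exact_mod_cast this
        linarith
      have h3 : (0:ℝ) < (sN j : ℝ) := by rw [hsN j]; exact hpos'
      have h4 : 0 < sN j := by exact_mod_cast h3
      omega
    have hkR : (0:ℝ) < k := by exact_mod_cast hk
    have hsNS : sN ∈ S := by
      rw [hS]
      refine ⟨hsN1, fun i => r i / k, fun i => div_nonneg (hr0 i) (le_of_lt hkR), ?_, ?_⟩
      · rw [← Finset.sum_div, div_le_one hkR]
        have hlt : ∑ i, r i < ∑ _i : Fin k, (1:ℝ) :=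
          Finset.sum_lt_sum_of_nonempty ⟨⟨0, hk⟩, Finset.mem_univ _⟩ (fun i _ => hr1 i)
        rw [Finset.sum_const, Finset.card_univ, Fintype.card_fin, nsmul_eq_mul, mul_one] at hlt
        linarith
      · funext j
        simp only [Finset.sum_apply, Pi.smul_apply, smul_eq_mul]
        rw [hsN j]
        apply Finset.sum_congr rfl
        intro i _
        push_cast
        field_simp
    have hnotmem : sN ∉ (Finset.univ.sigma B).image (fun x => (2^x.2) • v x.1) := by
      intro hmem
      obtain ⟨⟨i, j⟩, -, hgg⟩ := Finset.mem_image.mp hmem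
      have hc : (Pi.single i ((2:ℝ)^j) : Fin k → ℝ) = r := by
        apply huniq
        rw [← hpow_coeff i j, ← hsNcoeff, hgg]
      have h1 : (2:ℝ)^j = r i := by
        have := congrFun hc i
        simpa [Pi.single_eq_same] using this
      have h2 : (1:ℕ) ≤ 2^j := Nat.one_le_two_pow
      have h3 : (1:ℝ) ≤ 2^j := by exact_mod_cast h2
      have := hr1 i
      linarith
    refine ⟨insert sN ((Finset.univ.sigma B).image (fun x => (2^x.2) • v x.1)),
      Finset.insert_nonempty _ _, ?_, ?_⟩
    · intro x hx
      rcases Finset.mem_insert.mp (Finset.mem_coe.mp hx) with rfl | hx'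
      · rw [hX]; left; exact hsNS
      · exact hmemX x hx'
    · rw [Finset.sum_insert hnotmem, hPsum]
      funext j
      simp only [Pi.add_apply, hsNdef]
      have := hmp j
      omega
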